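/- Let E be a finite-dimensional real inner product space, let X be a nonempty compact convex subset of E, and let 0 ≤ γ ≤ 1. Then the collection X ÷ (γ • X) consists of exactly one set, namely (1 − γ) • X; that is, a nonempty compact convex set Z belongs to X ÷ (γ • X) if and only if Z = (1 − γ) • X. -/
import Mathlib


open Pointwise
open scoped RealInnerProductSpace

/-- The support function of a set `A ⊆ E`: `h_A(p) = sup_{a ∈ A} ⟪p, a⟫`. -/
noncomputable def supportFn {E : Type*} [NormedAddCommGroup E] [InnerProductSpace ℝ E]
    (A : Set E) (p : E) : ℝ :=
  sSup ((fun a => ⟪p, a⟫) '' A)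

/-- `Z` is a member of the generalized Minkowski–Pontryagin difference `X ÷ Y`:
`Z` is nonempty, compact, convex, `X ⊆ Y + Z`, and no nonempty compact convex
proper subset `Z' ⊊ Z` satisfies `X ⊆ Y + Z'`. -/
def MemGMPDiff {E : Type*} [NormedAddCommGroup E] [InnerProductSpace ℝ E]
    (X Y Z : Set E) : Prop :=
  Z.Nonempty ∧ IsCompact Z ∧ Convex ℝ Z ∧ X ⊆ Y + Z ∧
    ∀ Z' : Set E, Z'.Nonempty → IsCompact Z' → Convex ℝ Z' → Z' ⊂ Z → ¬ X ⊆ Y + Z'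

lemma gmp_key {E : Type*} [NormedAddCommGroup E] [InnerProductSpace ℝ E]
    {X Z : Set E} (hXc : IsCompact X)
    (hZc : IsClosed Z) (hZconv : Convex ℝ Z)
    {γ : ℝ} (hγ0 : 0 ≤ γ) (hγ1 : γ ≤ 1)
    (h : X ⊆ γ • X + Z) : (1 - γ) • X ⊆ Z := by
  rintro x ⟨a, haX, rfl⟩
  by_contra hxZ
  obtain ⟨f, u, hZu, hux⟩ := geometric_hahn_banach_closed_point hZconv hZc hxZ
  obtain ⟨m, hmX, hm⟩ := hXc.exists_isMaxOn ⟨a, haX⟩ f.continuous.continuousOn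
  obtain ⟨p, hp, z, hz, hsum⟩ := h hmX
  obtain ⟨b, hbX, rfl⟩ := hp
  have hfz : f z < u := hZu z hz
  have hfm : f (γ • b) + f z = f m := by rw [← map_add]; exact congrArg f hsum
  have h1 : f ((1 - γ) • a) = (1 - γ) * f a := by rw [map_smul]; rfl
  have h2 : f (γ • b) = γ * f b := by rw [map_smul]; rfl
  have hab : f a ≤ f m := hm haX
  have hbm : f b ≤ f m := hm hbX
  rw [h1] at hux
  nlinarith [hux, hfz, hfm, hab, hbm]

theorem gmpDiff_distributive
    {E : Type*} [NormedAddCommGroup E] [InnerProductSpace ℝ E] [FiniteDimensional ℝ E]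
    (X : Set E)
    (hXne : X.Nonempty) (hXc : IsCompact X) (hXconv : Convex ℝ X)
    (γ : ℝ) (hγ0 : 0 ≤ γ) (hγ1 : γ ≤ 1) :
    ∀ Z : Set E, Z.Nonempty → IsCompact Z → Convex ℝ Z →
      (MemGMPDiff X (γ • X) Z ↔ Z = (1 - γ) • X) := by
  intro Z hZne hZc hZconv
  have h1γ : (0:ℝ) ≤ 1 - γ := by linarith
  have hXW : X ⊆ γ • X + (1 - γ) • X := by
    have := hXconv.add_smul hγ0 h1γ
    rw [show γ + (1 - γ) = 1 by ring, one_smul] at this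
    exact this.subset
  have hWne : ((1 - γ) • X).Nonempty := hXne.smul_set
  have hWc : IsCompact ((1 - γ) • X) := hXc.smul _
  have hWconv : Convex ℝ ((1 - γ) • X) := hXconv.smul _
  constructor
  · rintro ⟨_, _, _, hsub, hmin⟩
    have hWZ : (1 - γ) • X ⊆ Z := gmp_key hXc hZc.isClosed hZconv hγ0 hγ1 hsub
    by_contra hne
    exact hmin _ hWne hWc hWconv (hWZ.ssubset_of_ne (Ne.symm hne)) hXW
  · rintro rfl
    refine ⟨hWne, hWc, hWconv, hXW, ?_⟩
    intro Z' hZ'ne hZ'c hZ'conv hss hsub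
    exact hss.2 (gmp_key hXc hZ'c.isClosed hZ'conv hγ0 hγ1 hsub)
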